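/- Let μ be a positive Borel measure on ℝ^N with compact support, let p ∈ [1, ∞), and let (T_n) be a sequence of weakly nonlinear (sublinear and translatable) and monotone operators from the Banach lattice L^p(μ) into itself such that M := sup_n ‖T_n‖ < ∞, where ‖T_n‖ = sup{‖T_n(f)‖_p : ‖f‖_p ≤ 1}. Assume that ‖T_n(h) − h‖_p → 0 as n → ∞ for each of the test functions h ∈ {1, pr_1, …, pr_N, −pr_1, …, −pr_N, Σ_{k=1}^N pr_k²} (regarded as elements of L^p(μ), which they are since μ has compact support). Then ‖T_n(f) − f‖_p → 0 for every f ∈ L^p(μ). -/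

import Mathlib

open MeasureTheory Filter Topology Set
open scoped ENNReal

set_option linter.unusedSectionVars false
namespace KorovkinAux

variable {α : Type*} {m : MeasurableSpace α} {μ : Measure α} {p : ℝ≥0∞} [Fact (1 ≤ p)]

lemma le_add_abs_sub (a b : Lp ℝ p μ) : a ≤ b + |a - b| :=
  sub_le_iff_le_add'.1 (le_abs_self (a - b))

lemma smul_mono_lp {a b : Lp ℝ p μ} {c : ℝ} (h0 : 0 ≤ c) (h : a ≤ b) : c • a ≤ c • b := by
  rw [← Lp.coeFn_le] at h ⊢
  filter_upwards [h, Lp.coeFn_smul c a, Lp.coeFn_smul c b] with x hx h1 h2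
  simp only [h1, h2, Pi.smul_apply, smul_eq_mul]
  exact mul_le_mul_of_nonneg_left hx h0

lemma smul_le_smul_add_abs {t u : Lp ℝ p μ} {c d : ℝ} (h0 : 0 ≤ c) (hcd : c ≤ d) :
    c • t ≤ c • u + d • |t - u| := by
  rw [← Lp.coeFn_le]
  filter_upwards [Lp.coeFn_smul c t, Lp.coeFn_add (c • u) (d • |t - u|), Lp.coeFn_smul c u,
    Lp.coeFn_smul d |t - u|, Lp.coeFn_abs (t - u), Lp.coeFn_sub t u] with x h1 h2 h3 h4 h5 h6
  simp only [h1, h2, h3, h4, h5, h6, Pi.smul_apply, smul_eq_mul, Pi.add_apply, Pi.sub_apply]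
  nlinarith [le_abs_self (t x - u x), abs_nonneg (t x - u x)]

lemma smul_sub_abs_le {t u : Lp ℝ p μ} {c d : ℝ} (h0 : 0 ≤ c) (hcd : c ≤ d) :
    c • u - d • |t - u| ≤ c • t := by
  rw [← Lp.coeFn_le]
  filter_upwards [Lp.coeFn_smul c t, Lp.coeFn_sub (c • u) (d • |t - u|), Lp.coeFn_smul c u,
    Lp.coeFn_smul d |t - u|, Lp.coeFn_abs (t - u), Lp.coeFn_sub t u] with x h1 h2 h3 h4 h5 h6
  simp only [h1, h2, h3, h4, h5, h6, Pi.smul_apply, smul_eq_mul, Pi.add_apply, Pi.sub_apply]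
  nlinarith [neg_abs_le (t x - u x), abs_nonneg (t x - u x)]

lemma coeFn_sum {ι : Type*} (s : Finset ι) (F : ι → Lp ℝ p μ) :
    ⇑(∑ i ∈ s, F i) =ᵐ[μ] fun x => ∑ i ∈ s, F i x := by
  classical
  induction s using Finset.induction_on with
  | empty => simp only [Finset.sum_empty]; exact Lp.coeFn_zero ℝ p μ
  | insert a s hx ih =>
    rw [Finset.sum_insert hx]
    filter_upwards [Lp.coeFn_add (F a) (∑ i ∈ s, F i), ih] with x h1 h2
    rw [Finset.sum_insert hx, h1]
    simp only [Pi.add_apply, h2]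

lemma T_sum_le {ι : Type*} (T : Lp ℝ p μ → Lp ℝ p μ)
    (hsub : ∀ f g, T (f + g) ≤ T f + T g) (hzero : T 0 = 0)
    (s : Finset ι) (h : ι → Lp ℝ p μ) :
    T (∑ i ∈ s, h i) ≤ ∑ i ∈ s, T (h i) := by
  classical
  induction s using Finset.induction_on with
  | empty => simp [hzero]
  | insert a s hx ih =>
    rw [Finset.sum_insert hx, Finset.sum_insert hx]
    exact le_trans (hsub _ _) (add_le_add le_rfl ih)

lemma max_sub_max_neg (a : ℝ) : max a 0 - max (-a) 0 = a := by
  rcases le_total a 0 with h | h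
  · rw [max_eq_right h, max_eq_left (neg_nonneg.2 h)]; ring
  · rw [max_eq_left h, max_eq_right (neg_nonpos.2 h)]; ring

set_option maxHeartbeats 2000000 in
lemma core {N : ℕ} {μ : Measure (Fin N → ℝ)} [IsFiniteMeasure μ] {p : ℝ≥0∞} [Fact (1 ≤ p)]
    {K : Set (Fin N → ℝ)} (hK : IsCompact K) (hμK : μ Kᶜ = 0)
    (T : ℕ → Lp ℝ p μ → Lp ℝ p μ)
    (hsubadd : ∀ n, ∀ f g : Lp ℝ p μ, T n (f + g) ≤ T n f + T n g)
    (hhom : ∀ n, ∀ (c : ℝ), 0 ≤ c → ∀ f : Lp ℝ p μ, T n (c • f) = c • T n f)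
    (hmono : ∀ n, ∀ f g : Lp ℝ p μ, f ≤ g → T n f ≤ T n g)
    (one : Lp ℝ p μ) (hone : ⇑one =ᵐ[μ] fun _ => (1:ℝ))
    (htr : ∀ n, ∀ f : Lp ℝ p μ, ∀ c : ℝ, 0 ≤ c → T n (f + c • one) = T n f + c • T n one)
    (pj : Fin N → Lp ℝ p μ) (hpj : ∀ k, ⇑(pj k) =ᵐ[μ] fun x => x k)
    (mj : Fin N → Lp ℝ p μ) (hmj : ∀ k, ⇑(mj k) =ᵐ[μ] fun x => -(x k))
    (e2 : Lp ℝ p μ) (he2 : ⇑e2 =ᵐ[μ] fun x => ∑ k, (x k)^2)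
    (cone : Tendsto (fun n => ‖T n one - one‖) atTop (𝓝 0))
    (cpj : ∀ k, Tendsto (fun n => ‖T n (pj k) - pj k‖) atTop (𝓝 0))
    (cmj : ∀ k, Tendsto (fun n => ‖T n (mj k) - mj k‖) atTop (𝓝 0))
    (ce2 : Tendsto (fun n => ‖T n e2 - e2‖) atTop (𝓝 0))
    (g : (Fin N → ℝ) → ℝ) (hgc : Continuous g) (hg0 : ∀ x, 0 ≤ g x)
    (C : ℝ) (hgC : ∀ x, g x ≤ C)
    (G : Lp ℝ p μ) (hG : ⇑G =ᵐ[μ] g) :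
    Tendsto (fun n => ‖T n G - G‖) atTop (𝓝 0) := by
  classical
  have hC0 : 0 ≤ C := le_trans (hg0 (fun _ => 0)) (hgC _)
  obtain ⟨R0, hR0⟩ := hK.isBounded.exists_norm_le
  set R : ℝ := max R0 0 with hRdef
  have hR : ∀ x ∈ K, ‖x‖ ≤ R := fun x hx => le_trans (hR0 x hx) (le_max_left _ _)
  have hRpos : 0 ≤ R := le_max_right _ _
  -- countable dense subset of K
  haveI hKsep : TopologicalSpace.SeparableSpace K := hK.isSeparable.separableSpace
  obtain ⟨u, hu_count, hu_dense⟩ := TopologicalSpace.exists_countable_dense K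
  set c : Set (Fin N → ℝ) := Subtype.val '' u with hcdef
  have hcK : c ⊆ K := by rintro _ ⟨z, _, rfl⟩; exact z.2
  have hcc : c.Countable := hu_count.image _
  have hKc : ∀ x ∈ K, x ∈ closure c := by
    intro x hx
    have h1 : (⟨x, hx⟩ : K) ∈ closure u := hu_dense _
    exact closure_subtype.1 h1
  have hxK : ∀ᵐ x ∂μ, x ∈ K := by
    rw [ae_iff]
    have : {x | ¬ x ∈ K} = Kᶜ := rfl
    rw [this, hμK]
  have hT0 : ∀ n, T n 0 = 0 := fun n => by simpa using hhom n 0 le_rfl 0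
  rw [Metric.tendsto_atTop]
  intro ε' hε'
  have honen : (0:ℝ) ≤ ‖one‖ := norm_nonneg _
  set ε : ℝ := ε' / (2 * (‖one‖ + 1)) with hεdef
  have hε : 0 < ε := by positivity
  -- uniform continuity on K
  obtain ⟨δ, hδ0, hδ⟩ : ∃ δ > 0, ∀ x ∈ K, ∀ y ∈ K, dist x y < δ → |g x - g y| < ε := by
    have h1 := hK.uniformContinuousOn_of_continuous hgc.continuousOn
    rw [Metric.uniformContinuousOn_iff] at h1
    obtain ⟨δ, hδ0, h⟩ := h1 ε hε
    exact ⟨δ, hδ0, fun x hx y hy hd => by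
      have := h x hx y hy hd; rwa [Real.dist_eq] at this⟩
  set lam : ℝ := 2 * C / δ ^ 2 with hlamdef
  have hlam : 0 ≤ lam := by positivity
  -- key pointwise inequality
  have key : ∀ x ∈ K, ∀ y ∈ K, |g x - g y| ≤ ε + lam * ∑ k, (x k - y k)^2 := by
    intro x hx y hy
    have hq0 : (0:ℝ) ≤ ∑ k, (x k - y k)^2 := Finset.sum_nonneg fun k _ => sq_nonneg _
    by_cases hd : dist x y < δ
    · have h1 := le_of_lt (hδ x hx y hy hd)
      nlinarith [mul_nonneg hlam hq0]
    · push_neg at hd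
      have hk : ∃ k, δ ≤ |x k - y k| := by
        by_contra h
        push_neg at h
        exact (not_lt.2 hd) ((dist_pi_lt_iff hδ0).2 fun b => by
          rw [Real.dist_eq]; exact h b)
      obtain ⟨k, hk⟩ := hk
      have h1 : δ^2 ≤ (x k - y k)^2 := by
        nlinarith [abs_nonneg (x k - y k), sq_abs (x k - y k)]
      have h2 : δ^2 ≤ ∑ k, (x k - y k)^2 :=
        le_trans h1 (Finset.single_le_sum (f := fun k => (x k - y k)^2) (fun k _ => sq_nonneg _) (Finset.mem_univ k))
      have h3 : 2*C ≤ lam * ∑ k, (x k - y k)^2 := by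
        have h4 : lam * δ^2 ≤ lam * ∑ k, (x k - y k)^2 := mul_le_mul_of_nonneg_left h2 hlam
        have h5 : lam * δ^2 = 2*C := by
          rw [hlamdef]; field_simp
        linarith
      have h6 : |g x - g y| ≤ 2*C := by
        have := abs_sub_abs_le_abs_sub (g x) (g y)
        have h7 : |g x| ≤ C := abs_le.2 ⟨by linarith [hg0 x], hgC x⟩
        have h8 : |g y| ≤ C := abs_le.2 ⟨by linarith [hg0 y], hgC y⟩
        calc |g x - g y| ≤ |g x| + |g y| := abs_sub _ _
          _ ≤ 2*C := by linarith
      linarith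
  -- per-n error elements
  set En : ℕ → Lp ℝ p μ := fun n => |T n one - one| with hEndef
  set Dn : ℕ → Lp ℝ p μ := fun n => |T n e2 - e2| + ((N:ℝ) * R^2) • En n
      + ∑ k, ((2*R) • |T n (mj k) - mj k| + (2*R) • |T n (pj k) - pj k|) with hDndef
  set Th : ℕ → Lp ℝ p μ := fun n => (C + ε) • En n + lam • Dn n with hThdef
  set S : (Fin N → ℝ) → Lp ℝ p μ := fun y => e2 + (∑ k, (y k)^2) • one
      + ∑ k, ((2 * max (y k) 0) • mj k + (2 * max (-(y k)) 0) • pj k) with hSdef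
  -- coe of S y
  have hScoe : ∀ y : Fin N → ℝ, ⇑(S y) =ᵐ[μ] fun x => ∑ k, (x k - y k)^2 := by
    intro y
    have hterm : ∀ k : Fin N, ⇑((2 * max (y k) 0) • mj k + (2 * max (-(y k)) 0) • pj k)
        =ᵐ[μ] fun x => (2 * max (y k) 0) * (-(x k)) + (2 * max (-(y k)) 0) * (x k) := by
      intro k
      filter_upwards [Lp.coeFn_add ((2 * max (y k) 0) • mj k) ((2 * max (-(y k)) 0) • pj k),
        Lp.coeFn_smul (2 * max (y k) 0) (mj k), Lp.coeFn_smul (2 * max (-(y k)) 0) (pj k),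
        hmj k, hpj k] with x h1 h2 h3 h4 h5
      simp only [h1, Pi.add_apply, h2, h3, Pi.smul_apply, smul_eq_mul, h4, h5]
    have hall : ∀ᵐ x ∂μ, ∀ k : Fin N, ((2 * max (y k) 0) • mj k + (2 * max (-(y k)) 0) • pj k) x
        = (2 * max (y k) 0) * (-(x k)) + (2 * max (-(y k)) 0) * (x k) := ae_all_iff.2 hterm
    filter_upwards [Lp.coeFn_add (e2 + (∑ k, (y k)^2) • one)
        (∑ k, ((2 * max (y k) 0) • mj k + (2 * max (-(y k)) 0) • pj k)),
      Lp.coeFn_add e2 ((∑ k, (y k)^2) • one), Lp.coeFn_smul (∑ k, (y k)^2) one, hone, he2,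
      coeFn_sum Finset.univ (fun k => (2 * max (y k) 0) • mj k + (2 * max (-(y k)) 0) • pj k),
      hall] with x h1 h2 h3 h4 h5 h6 h7
    rw [hSdef]
    simp only
    rw [h1]
    simp only [Pi.add_apply] at h2 ⊢
    rw [h2, h3, h6]
    simp only [Pi.smul_apply, smul_eq_mul, h4, h5]
    rw [Finset.sum_congr rfl (fun k _ => h7 k)]
    have : ∀ k : Fin N, (x k - y k)^2 = (x k)^2 + (y k)^2
        + ((2 * max (y k) 0) * (-(x k)) + (2 * max (-(y k)) 0) * (x k)) := by
      intro k
      linear_combination (2 * x k) * max_sub_max_neg (y k)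
    rw [Finset.sum_congr rfl (fun k _ => this k)]
    simp only [Finset.sum_add_distrib]
    ring
  -- T n (S y) is dominated by S y + Dn n
  have hTS : ∀ n, ∀ y ∈ K, T n (S y) ≤ S y + Dn n := by
    intro n y hy
    have hyk : ∀ k, |y k| ≤ R := fun k => by
      have h1 : ‖y k‖ ≤ ‖y‖ := norm_le_pi_norm y k
      rw [Real.norm_eq_abs] at h1
      exact le_trans h1 (hR y hy)
    have hcy : (∑ k, (y k)^2) ≤ (N:ℝ) * R^2 := by
      calc (∑ k, (y k)^2) ≤ ∑ _k : Fin N, R^2 := by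
            refine Finset.sum_le_sum fun k _ => ?_
            rw [← sq_abs]
            exact pow_le_pow_left₀ (abs_nonneg _) (hyk k) 2
        _ = (N:ℝ) * R^2 := by
            rw [Finset.sum_const, Finset.card_univ, Fintype.card_fin, nsmul_eq_mul]
    have hcy0 : (0:ℝ) ≤ ∑ k, (y k)^2 := Finset.sum_nonneg fun k _ => sq_nonneg _
    have ha : ∀ k, 0 ≤ 2 * max (y k) 0 := fun k => by positivity
    have haR : ∀ k, 2 * max (y k) 0 ≤ 2 * R := fun k => by
      have h1 := abs_le.1 (hyk k)
      have h2 : max (y k) 0 ≤ R := max_le (by linarith [h1.2]) hRpos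
      linarith
    have hb : ∀ k, 0 ≤ 2 * max (-(y k)) 0 := fun k => by positivity
    have hbR : ∀ k, 2 * max (-(y k)) 0 ≤ 2 * R := fun k => by
      have h1 := abs_le.1 (hyk k)
      have h2 : max (-(y k)) 0 ≤ R := max_le (by linarith [h1.1]) hRpos
      linarith
    have step1 : T n (S y) ≤ T n e2 + (∑ k, (y k)^2) • T n one
        + ∑ k, ((2 * max (y k) 0) • T n (mj k) + (2 * max (-(y k)) 0) • T n (pj k)) := by
      calc T n (S y) ≤ T n (e2 + (∑ k, (y k)^2) • one)
            + T n (∑ k, ((2 * max (y k) 0) • mj k + (2 * max (-(y k)) 0) • pj k)) :=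
            hsubadd n _ _
        _ ≤ (T n e2 + T n ((∑ k, (y k)^2) • one))
            + ∑ k, T n ((2 * max (y k) 0) • mj k + (2 * max (-(y k)) 0) • pj k) :=
            add_le_add (hsubadd n _ _) (T_sum_le (T n) (hsubadd n) (hT0 n) _ _)
        _ ≤ (T n e2 + (∑ k, (y k)^2) • T n one)
            + ∑ k, ((2 * max (y k) 0) • T n (mj k) + (2 * max (-(y k)) 0) • T n (pj k)) := by
            rw [hhom n _ hcy0 one]
            refine add_le_add le_rfl (Finset.sum_le_sum fun k _ => ?_)
            calc T n ((2 * max (y k) 0) • mj k + (2 * max (-(y k)) 0) • pj k)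
                ≤ T n ((2 * max (y k) 0) • mj k) + T n ((2 * max (-(y k)) 0) • pj k) :=
                hsubadd n _ _
              _ = (2 * max (y k) 0) • T n (mj k) + (2 * max (-(y k)) 0) • T n (pj k) := by
                  rw [hhom n _ (ha k), hhom n _ (hb k)]
    have p1 : T n e2 ≤ e2 + |T n e2 - e2| := le_add_abs_sub _ _
    have p2 : (∑ k, (y k)^2) • T n one ≤ (∑ k, (y k)^2) • one + ((N:ℝ)*R^2) • En n :=
      smul_le_smul_add_abs hcy0 hcy
    have p3 : ∀ k, (2 * max (y k) 0) • T n (mj k) + (2 * max (-(y k)) 0) • T n (pj k)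
        ≤ ((2 * max (y k) 0) • mj k + (2 * max (-(y k)) 0) • pj k)
          + ((2*R) • |T n (mj k) - mj k| + (2*R) • |T n (pj k) - pj k|) := by
      intro k
      have q1 := smul_le_smul_add_abs (t := T n (mj k)) (u := mj k) (ha k) (haR k)
      have q2 := smul_le_smul_add_abs (t := T n (pj k)) (u := pj k) (hb k) (hbR k)
      calc (2 * max (y k) 0) • T n (mj k) + (2 * max (-(y k)) 0) • T n (pj k)
          ≤ ((2 * max (y k) 0) • mj k + (2*R) • |T n (mj k) - mj k|)
            + ((2 * max (-(y k)) 0) • pj k + (2*R) • |T n (pj k) - pj k|) := add_le_add q1 q2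
        _ = ((2 * max (y k) 0) • mj k + (2 * max (-(y k)) 0) • pj k)
            + ((2*R) • |T n (mj k) - mj k| + (2*R) • |T n (pj k) - pj k|) := by abel
    calc T n (S y) ≤ T n e2 + (∑ k, (y k)^2) • T n one
          + ∑ k, ((2 * max (y k) 0) • T n (mj k) + (2 * max (-(y k)) 0) • T n (pj k)) := step1
      _ ≤ (e2 + |T n e2 - e2|) + ((∑ k, (y k)^2) • one + ((N:ℝ)*R^2) • En n)
          + ∑ k, (((2 * max (y k) 0) • mj k + (2 * max (-(y k)) 0) • pj k)
            + ((2*R) • |T n (mj k) - mj k| + (2*R) • |T n (pj k) - pj k|)) :=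
          add_le_add (add_le_add p1 p2) (Finset.sum_le_sum fun k _ => p3 k)
      _ = S y + Dn n := by
          show _ = (e2 + (∑ k, (y k)^2) • one
              + ∑ k, ((2 * max (y k) 0) • mj k + (2 * max (-(y k)) 0) • pj k))
            + (|T n e2 - e2| + ((N:ℝ) * R^2) • En n
              + ∑ k, ((2*R) • |T n (mj k) - mj k| + (2*R) • |T n (pj k) - pj k|))
          rw [Finset.sum_add_distrib]
          abel
  have hTone : ∀ n, T n one ≤ one + En n := fun n => le_add_abs_sub _ _
  -- upper Lp inequality
  have up : ∀ n, ∀ y ∈ c, T n G ≤ (g y + ε) • one + lam • S y + Th n := by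
    intro n y hyc
    have hyK : y ∈ K := hcK hyc
    have s1 : G ≤ lam • S y + (g y + ε) • one := by
      rw [← Lp.coeFn_le]
      filter_upwards [hG, hxK, Lp.coeFn_add (lam • S y) ((g y + ε) • one),
        Lp.coeFn_smul lam (S y), Lp.coeFn_smul (g y + ε) one, hScoe y, hone]
        with x h1 h2 h3 h4 h5 h6 h7
      rw [h1, h3]
      simp only [Pi.add_apply, h4, h5, Pi.smul_apply, smul_eq_mul, h6, h7]
      have h9 := (abs_le.1 (key x h2 y hyK)).2
      linarith
    have s2 : T n G ≤ lam • T n (S y) + (g y + ε) • T n one := by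
      have h1 := hmono n _ _ s1
      rwa [htr n (lam • S y) (g y + ε) (add_nonneg (hg0 y) hε.le),
        hhom n lam hlam (S y)] at h1
    have s4 : lam • T n (S y) ≤ lam • S y + lam • Dn n := by
      have h1 := smul_mono_lp hlam (hTS n y hyK)
      rwa [smul_add] at h1
    have s5 : (g y + ε) • T n one ≤ (g y + ε) • one + (C + ε) • En n :=
      smul_le_smul_add_abs (add_nonneg (hg0 y) hε.le) (by linarith [hgC y])
    calc T n G ≤ lam • T n (S y) + (g y + ε) • T n one := s2
      _ ≤ (lam • S y + lam • Dn n) + ((g y + ε) • one + (C + ε) • En n) := add_le_add s4 s5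
      _ = (g y + ε) • one + lam • S y + ((C + ε) • En n + lam • Dn n) := by abel
      _ = (g y + ε) • one + lam • S y + Th n := rfl
  -- lower Lp inequality
  have lo : ∀ n, ∀ y ∈ c, g y • one - ε • one - lam • S y - Th n ≤ T n G := by
    intro n y hyc
    have hyK : y ∈ K := hcK hyc
    have s1 : g y • one ≤ G + (lam • S y + ε • one) := by
      rw [← Lp.coeFn_le]
      filter_upwards [hG, hxK, Lp.coeFn_add G (lam • S y + ε • one),
        Lp.coeFn_add (lam • S y) (ε • one), Lp.coeFn_smul lam (S y), Lp.coeFn_smul ε one,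
        Lp.coeFn_smul (g y) one, hScoe y, hone] with x h1 h2 h3 h4 h5 h6 h7 h8 h9
      rw [h7, h3]
      simp only [Pi.add_apply, h1, h4, h5, h6, Pi.smul_apply, smul_eq_mul, h8, h9]
      have h10 := (abs_le.1 (key x h2 y hyK)).1
      linarith
    have s2 : T n (g y • one) ≤ T n G + T n (lam • S y + ε • one) :=
      le_trans (hmono n _ _ s1) (hsubadd n _ _)
    have s4 : T n (lam • S y + ε • one) = lam • T n (S y) + ε • T n one := by
      rw [htr n (lam • S y) ε hε.le, hhom n lam hlam (S y)]
    have s5 : lam • T n (S y) ≤ lam • S y + lam • Dn n := by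
      have h1 := smul_mono_lp hlam (hTS n y hyK)
      rwa [smul_add] at h1
    have s6 : ε • T n one ≤ ε • one + ε • En n := by
      have h1 := smul_mono_lp hε.le (hTone n)
      rwa [smul_add] at h1
    have s7 : g y • one - C • En n ≤ g y • T n one :=
      smul_sub_abs_le (hg0 y) (hgC y)
    have s8 : T n (g y • one) - T n (lam • S y + ε • one) ≤ T n G := sub_le_iff_le_add.2 s2
    calc g y • one - ε • one - lam • S y - Th n
        = (g y • one - C • En n) - ((lam • S y + lam • Dn n) + (ε • one + ε • En n)) := by
          show g y • one - ε • one - lam • S y - ((C + ε) • En n + lam • Dn n) = _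
          rw [add_smul]
          abel
      _ ≤ g y • T n one - (lam • T n (S y) + ε • T n one) :=
          sub_le_sub s7 (add_le_add s5 s6)
      _ = T n (g y • one) - T n (lam • S y + ε • one) := by
          rw [hhom n _ (hg0 y) one, s4]
      _ ≤ T n G := s8
  -- pointwise master estimate
  have master : ∀ n, ∀ᵐ x ∂μ, |T n G x - G x| ≤ ε + Th n x := by
    intro n
    have upae : ∀ᵐ x ∂μ, ∀ y ∈ c,
        T n G x ≤ (g y + ε) + lam * (∑ k, (x k - y k)^2) + Th n x := by
      rw [ae_ball_iff hcc]
      intro y hyc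
      have h := (Lp.coeFn_le _ _).2 (up n y hyc)
      filter_upwards [h, Lp.coeFn_add ((g y + ε) • one + lam • S y) (Th n),
        Lp.coeFn_add ((g y + ε) • one) (lam • S y), Lp.coeFn_smul (g y + ε) one,
        Lp.coeFn_smul lam (S y), hScoe y, hone] with x h1 h2 h3 h4 h5 h6 h7
      rw [h2] at h1
      simp only [Pi.add_apply, h3, h4, h5, Pi.smul_apply, smul_eq_mul, h6, h7] at h1
      linarith
    have loae : ∀ᵐ x ∂μ, ∀ y ∈ c,
        (g y - ε) - lam * (∑ k, (x k - y k)^2) - Th n x ≤ T n G x := by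
      rw [ae_ball_iff hcc]
      intro y hyc
      have h := (Lp.coeFn_le _ _).2 (lo n y hyc)
      filter_upwards [h, Lp.coeFn_sub (g y • one - ε • one - lam • S y) (Th n),
        Lp.coeFn_sub (g y • one - ε • one) (lam • S y), Lp.coeFn_sub (g y • one) (ε • one),
        Lp.coeFn_smul (g y) one, Lp.coeFn_smul ε one, Lp.coeFn_smul lam (S y),
        hScoe y, hone] with x h1 h2 h3 h4 h5 h6 h7 h8 h9
      rw [h2] at h1
      simp only [Pi.sub_apply, h3, h4, h5, h6, h7, Pi.smul_apply, smul_eq_mul, h8, h9] at h1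
      linarith
    filter_upwards [hxK, upae, loae, hG] with x hx hup hlo hGx
    have hcont : Continuous fun y : Fin N → ℝ =>
        (g y + ε) + lam * (∑ k, (x k - y k)^2) + Th n x :=
      ((hgc.add continuous_const).add (continuous_const.mul
        (continuous_finset_sum _ fun k _ =>
          (continuous_const.sub (continuous_apply k)).pow 2))).add continuous_const
    have hcont2 : Continuous fun y : Fin N → ℝ =>
        (g y - ε) - lam * (∑ k, (x k - y k)^2) - Th n x :=
      (((hgc.sub continuous_const).sub (continuous_const.mul
        (continuous_finset_sum _ fun k _ =>
          (continuous_const.sub (continuous_apply k)).pow 2)))).sub continuous_const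
    have hup' : T n G x ≤ (g x + ε) + lam * (∑ k, (x k - x k)^2) + Th n x := by
      have hset : closure c ⊆ {y | T n G x ≤ (g y + ε) + lam * (∑ k, (x k - y k)^2) + Th n x} :=
        (isClosed_le continuous_const hcont).closure_subset_iff.2 (fun z hz => hup z hz)
      exact hset (hKc x hx)
    have hlo' : (g x - ε) - lam * (∑ k, (x k - x k)^2) - Th n x ≤ T n G x := by
      have hset : closure c ⊆ {y | (g y - ε) - lam * (∑ k, (x k - y k)^2) - Th n x ≤ T n G x} :=
        (isClosed_le hcont2 continuous_const).closure_subset_iff.2 (fun z hz => hlo z hz)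
      exact hset (hKc x hx)
    have hq : (∑ k, (x k - x k)^2) = 0 := by simp
    rw [hq, mul_zero] at hup' hlo'
    rw [hGx, abs_le]
    constructor
    · linarith
    · linarith
  -- norm estimate
  have est : ∀ n, ‖T n G - G‖ ≤ ε * ‖one‖ + ‖Th n‖ := by
    intro n
    have h1 : |T n G - G| ≤ |ε • one + Th n| := by
      have h2 : |T n G - G| ≤ ε • one + Th n := by
        rw [← Lp.coeFn_le]
        filter_upwards [master n, Lp.coeFn_abs (T n G - G), Lp.coeFn_sub (T n G) G,
          Lp.coeFn_add (ε • one) (Th n), Lp.coeFn_smul ε one, hone] with x m1 m2 m3 m4 m5 m6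
        rw [m2, m3, m4]
        simp only [Pi.sub_apply, Pi.add_apply, m5, Pi.smul_apply, smul_eq_mul, m6]
        calc |T n G x - G x| ≤ ε + Th n x := m1
          _ = ε * 1 + Th n x := by ring
      exact h2.trans (le_abs_self _)
    have h3 : ‖T n G - G‖ ≤ ‖ε • one + Th n‖ := HasSolidNorm.solid h1
    calc ‖T n G - G‖ ≤ ‖ε • one + Th n‖ := h3
      _ ≤ ‖ε • one‖ + ‖Th n‖ := norm_add_le _ _
      _ = ε * ‖one‖ + ‖Th n‖ := by rw [norm_smul, Real.norm_eq_abs, abs_of_pos hε]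
  -- the error norms tend to zero
  have hThn : Tendsto (fun n => ‖Th n‖) atTop (𝓝 0) := by
    have bound : ∀ n, ‖Th n‖ ≤ (C + ε) * ‖T n one - one‖
        + lam * (‖T n e2 - e2‖ + ((N:ℝ)*R^2) * ‖T n one - one‖
          + ∑ k, ((2*R) * ‖T n (mj k) - mj k‖ + (2*R) * ‖T n (pj k) - pj k‖)) := by
      intro n
      have d1 : ‖En n‖ = ‖T n one - one‖ := norm_abs_eq_norm _
      have d2 : ‖Dn n‖ ≤ ‖T n e2 - e2‖ + ((N:ℝ)*R^2) * ‖T n one - one‖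
          + ∑ k, ((2*R) * ‖T n (mj k) - mj k‖ + (2*R) * ‖T n (pj k) - pj k‖) := by
        calc ‖Dn n‖ ≤ ‖|T n e2 - e2| + ((N:ℝ) * R^2) • En n‖
              + ‖∑ k, ((2*R) • |T n (mj k) - mj k| + (2*R) • |T n (pj k) - pj k|)‖ :=
              norm_add_le _ _
          _ ≤ (‖|T n e2 - e2|‖ + ‖((N:ℝ) * R^2) • En n‖)
              + ∑ k, ‖(2*R) • |T n (mj k) - mj k| + (2*R) • |T n (pj k) - pj k|‖ :=
              add_le_add (norm_add_le _ _) (norm_sum_le _ _)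
          _ ≤ (‖T n e2 - e2‖ + ((N:ℝ)*R^2) * ‖T n one - one‖)
              + ∑ k, ((2*R) * ‖T n (mj k) - mj k‖ + (2*R) * ‖T n (pj k) - pj k‖) := by
              refine add_le_add (le_of_eq ?_) (Finset.sum_le_sum fun k _ => ?_)
              · rw [norm_abs_eq_norm, norm_smul, Real.norm_eq_abs,
                  abs_of_nonneg (by positivity : (0:ℝ) ≤ (N:ℝ)*R^2), d1]
              · calc ‖(2*R) • |T n (mj k) - mj k| + (2*R) • |T n (pj k) - pj k|‖
                    ≤ ‖(2*R) • |T n (mj k) - mj k|‖ + ‖(2*R) • |T n (pj k) - pj k|‖ :=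
                      norm_add_le _ _
                  _ = (2*R) * ‖T n (mj k) - mj k‖ + (2*R) * ‖T n (pj k) - pj k‖ := by
                      rw [norm_smul, norm_smul, Real.norm_eq_abs,
                        abs_of_nonneg (by positivity : (0:ℝ) ≤ 2*R),
                        norm_abs_eq_norm, norm_abs_eq_norm]
          _ = _ := by ring
      calc ‖Th n‖ ≤ ‖(C + ε) • En n‖ + ‖lam • Dn n‖ := norm_add_le _ _
        _ = (C + ε) * ‖T n one - one‖ + lam * ‖Dn n‖ := by
            rw [norm_smul, norm_smul, Real.norm_eq_abs, Real.norm_eq_abs,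
              abs_of_nonneg (by positivity : (0:ℝ) ≤ C + ε), abs_of_nonneg hlam, d1]
        _ ≤ _ := by
            refine add_le_add le_rfl (mul_le_mul_of_nonneg_left d2 hlam)
    refine squeeze_zero (fun n => norm_nonneg _) bound ?_
    have hlim : Tendsto (fun n => (C + ε) * ‖T n one - one‖
        + lam * (‖T n e2 - e2‖ + ((N:ℝ)*R^2) * ‖T n one - one‖
          + ∑ k, ((2*R) * ‖T n (mj k) - mj k‖ + (2*R) * ‖T n (pj k) - pj k‖)))
        atTop (𝓝 ((C + ε) * 0 + lam * (0 + ((N:ℝ)*R^2) * 0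
          + ∑ _k : Fin N, ((2*R) * 0 + (2*R) * 0)))) := by
      refine Tendsto.add (cone.const_mul _) (Tendsto.const_mul _ ?_)
      refine Tendsto.add (Tendsto.add ce2 (cone.const_mul _)) ?_
      exact tendsto_finset_sum _ fun k _ =>
        Tendsto.add ((cmj k).const_mul _) ((cpj k).const_mul _)
    simpa using hlim
  -- conclusion
  obtain ⟨n₀, hn₀⟩ := Metric.tendsto_atTop.1 hThn (ε'/2) (by positivity)
  refine ⟨n₀, fun n hn => ?_⟩
  have h1 := est n
  have h2 := hn₀ n hn
  rw [Real.dist_eq, sub_zero, abs_of_nonneg (norm_nonneg _)] at h2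
  have h3 : ε * ‖one‖ < ε' / 2 := by
    rw [hεdef, div_mul_eq_mul_div, div_lt_iff₀ (by positivity : (0:ℝ) < 2 * (‖one‖ + 1))]
    nlinarith
  rw [Real.dist_eq, sub_zero, abs_of_nonneg (norm_nonneg _)]
  linarith

end KorovkinAux

set_option maxHeartbeats 1000000 in
/-- **Theorem `thmLp`, second part.** Korovkin-type theorem for
convergence in `p`-mean: weakly nonlinear (sublinear and translatable) and monotone
operators on `L^p(μ)`, `μ` a finite Borel measure on `ℝ^N` with compact support,
uniformly bounded in norm, with the test functions `1, ±pr_1, …, ±pr_N, Σ pr_k²`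
(regarded as elements of `L^p(μ)`); conclusion for every `f ∈ L^p(μ)`. -/
theorem korovkin_Lp_weaklyNonlinear {N : ℕ} (μ : Measure (Fin N → ℝ))
    [IsFiniteMeasure μ]
    (hμsupp : ∃ K : Set (Fin N → ℝ), IsCompact K ∧ μ Kᶜ = 0)
    (p : ℝ≥0∞) (hp1 : 1 ≤ p) (hptop : p ≠ ∞)
    (T : ℕ → Lp ℝ p μ → Lp ℝ p μ)
    (hsubadd : ∀ n, ∀ f g : Lp ℝ p μ, T n (f + g) ≤ T n f + T n g)
    (hhom : ∀ n, ∀ (α : ℝ), 0 ≤ α → ∀ f : Lp ℝ p μ, T n (α • f) = α • T n f)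
    (hmono : ∀ n, ∀ f g : Lp ℝ p μ, f ≤ g → T n f ≤ T n g)
    -- translatability: `T (f + α • 1) = T f + α • T 1`, `1` the constant function one
    (htrans : ∀ n, ∀ one : Lp ℝ p μ, (⇑one : (Fin N → ℝ) → ℝ) =ᵐ[μ] (fun _ => (1 : ℝ)) →
      ∀ f : Lp ℝ p μ, ∀ α : ℝ, 0 ≤ α → T n (f + α • one) = T n f + α • T n one)
    -- `M = sup_n ‖T n‖ < ∞`
    (hM : ∃ M : ℝ, ∀ n, ∀ f : Lp ℝ p μ, ‖f‖ ≤ 1 → ‖T n f‖ ≤ M)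
    -- convergence in `p`-mean on the test functions (as elements of `L^p(μ)`)
    (htest : ∀ h : (Fin N → ℝ) → ℝ,
      ((h = fun _ => (1 : ℝ)) ∨ (∃ k : Fin N, h = fun x => x k) ∨
        (∃ k : Fin N, h = fun x => -(x k)) ∨ (h = fun x => ∑ k, (x k) ^ 2)) →
      ∀ H : Lp ℝ p μ, (⇑H : (Fin N → ℝ) → ℝ) =ᵐ[μ] h →
        Tendsto (fun n => ‖T n H - H‖) atTop (𝓝 0))
    (f : Lp ℝ p μ) :
    Tendsto (fun n => ‖T n f - f‖) atTop (𝓝 0) := by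
  classical
  haveI : Fact (1 ≤ p) := ⟨hp1⟩
  obtain ⟨K, hK, hμK⟩ := hμsupp
  obtain ⟨M, hM⟩ := hM
  have hxK : ∀ᵐ x ∂μ, x ∈ K := by
    rw [ae_iff]
    have h : {x | ¬ x ∈ K} = Kᶜ := rfl
    rw [h, hμK]
  obtain ⟨R0, hR0⟩ := hK.isBounded.exists_norm_le
  -- basic operator facts
  have hT0 : ∀ n, T n 0 = 0 := fun n => by simpa using hhom n 0 le_rfl 0
  have hM0 : 0 ≤ M := by
    have h := hM 0 0 (by simp)
    rwa [hT0 0, norm_zero] at h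
  have hTbound : ∀ n (h : Lp ℝ p μ), ‖T n h‖ ≤ M * ‖h‖ := by
    intro n h
    by_cases hh : h = 0
    · simp [hh, hT0 n]
    · have hn : 0 < ‖h‖ := norm_pos_iff.2 hh
      have h1 : h = ‖h‖ • (‖h‖⁻¹ • h) := by
        rw [smul_smul, mul_inv_cancel₀ hn.ne', one_smul]
      have h2 : ‖‖h‖⁻¹ • h‖ ≤ 1 := by
        rw [norm_smul, Real.norm_eq_abs, abs_of_nonneg (by positivity), inv_mul_cancel₀ hn.ne']
      calc ‖T n h‖ = ‖T n (‖h‖ • (‖h‖⁻¹ • h))‖ := by rw [← h1]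
        _ = ‖‖h‖ • T n (‖h‖⁻¹ • h)‖ := by rw [hhom n _ hn.le]
        _ = ‖h‖ * ‖T n (‖h‖⁻¹ • h)‖ := by
            rw [norm_smul, Real.norm_eq_abs, abs_of_nonneg hn.le]
        _ ≤ ‖h‖ * M := mul_le_mul_of_nonneg_left (hM n _ h2) hn.le
        _ = M * ‖h‖ := mul_comm _ _
  have hTlip : ∀ n (a b : Lp ℝ p μ), ‖T n a - T n b‖ ≤ M * ‖a - b‖ := by
    intro n a b
    have h1 : T n a - T n b ≤ T n (|a - b|) := by
      have h2 : T n a ≤ T n (a - b) + T n b := by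
        have h3 : a - b + b = a := by abel
        calc T n a = T n (a - b + b) := by rw [h3]
          _ ≤ T n (a - b) + T n b := hsubadd n _ _
      have h4 : T n (a - b) ≤ T n (|a - b|) := hmono n _ _ (le_abs_self _)
      calc T n a - T n b ≤ T n (a - b) := sub_le_iff_le_add.2 h2
        _ ≤ T n (|a - b|) := h4
    have h5 : T n b - T n a ≤ T n (|a - b|) := by
      have h2 : T n b ≤ T n (b - a) + T n a := by
        have h3 : b - a + a = b := by abel
        calc T n b = T n (b - a + a) := by rw [h3]
          _ ≤ T n (b - a) + T n a := hsubadd n _ _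
      have h4 : T n (b - a) ≤ T n (|a - b|) := by
        refine hmono n _ _ ?_
        rw [abs_sub_comm]
        exact le_abs_self _
      calc T n b - T n a ≤ T n (b - a) := sub_le_iff_le_add.2 h2
        _ ≤ T n (|a - b|) := h4
    have h6 : |T n a - T n b| ≤ |(T n (|a - b|))| := by
      refine le_trans (abs_le'.2 ⟨h1, ?_⟩) (le_abs_self _)
      rw [neg_sub]
      exact h5
    have h7 : ‖T n a - T n b‖ ≤ ‖T n (|a - b|)‖ := HasSolidNorm.solid h6
    calc ‖T n a - T n b‖ ≤ ‖T n (|a - b|)‖ := h7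
      _ ≤ M * ‖|a - b|‖ := hTbound n _
      _ = M * ‖a - b‖ := by rw [norm_abs_eq_norm]
  -- test elements
  have mem_one : MemLp (fun _ : Fin N → ℝ => (1:ℝ)) p μ := memLp_const 1
  set one : Lp ℝ p μ := mem_one.toLp _ with hone_def
  have hone : ⇑one =ᵐ[μ] fun _ => (1:ℝ) := mem_one.coeFn_toLp
  have mem_pj : ∀ k, MemLp (fun x : Fin N → ℝ => x k) p μ := by
    intro k
    refine MemLp.of_bound (continuous_apply k).aestronglyMeasurable R0 ?_
    filter_upwards [hxK] with x hx
    exact le_trans (norm_le_pi_norm x k) (hR0 x hx)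
  set pj : Fin N → Lp ℝ p μ := fun k => (mem_pj k).toLp _ with hpj_def
  have hpj : ∀ k, ⇑(pj k) =ᵐ[μ] fun x => x k := fun k => (mem_pj k).coeFn_toLp
  have mem_mj : ∀ k, MemLp (fun x : Fin N → ℝ => -(x k)) p μ := fun k => (mem_pj k).neg
  set mj : Fin N → Lp ℝ p μ := fun k => (mem_mj k).toLp _ with hmj_def
  have hmj : ∀ k, ⇑(mj k) =ᵐ[μ] fun x => -(x k) := fun k => (mem_mj k).coeFn_toLp
  have mem_e2 : MemLp (fun x : Fin N → ℝ => ∑ k, (x k)^2) p μ := by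
    refine MemLp.of_bound ?_ ((N:ℝ) * R0^2) ?_
    · exact (continuous_finset_sum _ fun k _ => (continuous_apply k).pow 2).aestronglyMeasurable
    · filter_upwards [hxK] with x hx
      have h1 : ∀ k, (x k)^2 ≤ R0^2 := by
        intro k
        have h2 : |x k| ≤ R0 := by
          have := norm_le_pi_norm x k
          rw [Real.norm_eq_abs] at this
          exact le_trans this (hR0 x hx)
        rw [← sq_abs]
        exact pow_le_pow_left₀ (abs_nonneg _) h2 2
      have h3 : (0:ℝ) ≤ ∑ k, (x k)^2 := Finset.sum_nonneg fun k _ => sq_nonneg _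
      rw [Real.norm_eq_abs, abs_of_nonneg h3]
      calc (∑ k, (x k)^2) ≤ ∑ _k : Fin N, R0^2 := Finset.sum_le_sum fun k _ => h1 k
        _ = (N:ℝ) * R0^2 := by
          rw [Finset.sum_const, Finset.card_univ, Fintype.card_fin, nsmul_eq_mul]
  set e2 : Lp ℝ p μ := mem_e2.toLp _ with he2_def
  have he2 : ⇑e2 =ᵐ[μ] fun x => ∑ k, (x k)^2 := mem_e2.coeFn_toLp
  -- convergence on test elements
  have cone : Tendsto (fun n => ‖T n one - one‖) atTop (𝓝 0) :=
    htest (fun _ => 1) (Or.inl rfl) one hone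
  have cpj : ∀ k, Tendsto (fun n => ‖T n (pj k) - pj k‖) atTop (𝓝 0) :=
    fun k => htest (fun x => x k) (Or.inr (Or.inl ⟨k, rfl⟩)) (pj k) (hpj k)
  have cmj : ∀ k, Tendsto (fun n => ‖T n (mj k) - mj k‖) atTop (𝓝 0) :=
    fun k => htest (fun x => -(x k)) (Or.inr (Or.inr (Or.inl ⟨k, rfl⟩))) (mj k) (hmj k)
  have ce2 : Tendsto (fun n => ‖T n e2 - e2‖) atTop (𝓝 0) :=
    htest (fun x => ∑ k, (x k)^2) (Or.inr (Or.inr (Or.inr rfl))) e2 he2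
  -- convergence for bounded continuous functions
  have hBC : ∀ (g : BoundedContinuousFunction (Fin N → ℝ) ℝ) (G : Lp ℝ p μ),
      ⇑G =ᵐ[μ] ⇑g → Tendsto (fun n => ‖T n G - G‖) atTop (𝓝 0) := by
    intro g G hGg
    set C : ℝ := ‖g‖ with hCdef
    have hC0 : 0 ≤ C := norm_nonneg _
    have hgb : ∀ x, -C ≤ g x ∧ g x ≤ C := by
      intro x
      have hb := g.norm_coe_le_norm x
      rw [Real.norm_eq_abs] at hb
      exact abs_le.1 hb
    have hg1 : ∀ x, 0 ≤ g x + C := fun x => by linarith [(hgb x).1]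
    have hg2 : ∀ x, g x + C ≤ 2 * C := fun x => by linarith [(hgb x).2]
    have hG'coe : ⇑(G + C • one) =ᵐ[μ] fun x => g x + C := by
      filter_upwards [Lp.coeFn_add G (C • one), Lp.coeFn_smul C one, hone, hGg]
        with x h1 h2 h3 h4
      simp only [h1, Pi.add_apply, h2, Pi.smul_apply, smul_eq_mul, h3, h4, mul_one]
    have hcore := KorovkinAux.core hK hμK T hsubadd hhom hmono one hone
      (fun n f α hα => htrans n one hone f α hα) pj hpj mj hmj e2 he2 cone cpj cmj ce2
      (fun x => g x + C) (g.continuous.add continuous_const) hg1 (2 * C) hg2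
      (G + C • one) hG'coe
    have hsplit : ∀ n, T n G - G = (T n (G + C • one) - (G + C • one)) - C • (T n one - one) := by
      intro n
      rw [htrans n one hone G C hC0, smul_sub]
      abel
    have hb : ∀ n, ‖T n G - G‖ ≤ ‖T n (G + C • one) - (G + C • one)‖ + C * ‖T n one - one‖ := by
      intro n
      rw [hsplit n]
      calc ‖(T n (G + C • one) - (G + C • one)) - C • (T n one - one)‖
          ≤ ‖T n (G + C • one) - (G + C • one)‖ + ‖C • (T n one - one)‖ := norm_sub_le _ _
        _ = ‖T n (G + C • one) - (G + C • one)‖ + C * ‖T n one - one‖ := by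
            rw [norm_smul, Real.norm_eq_abs, abs_of_nonneg hC0]
    refine squeeze_zero (fun n => norm_nonneg _) hb ?_
    have := Tendsto.add hcore (cone.const_mul C)
    simpa using this
  -- density argument
  rw [Metric.tendsto_atTop]
  intro ε' hε'
  have hdense := Lp.boundedContinuousFunction_dense ℝ μ hptop
  have hf := hdense f
  rw [Metric.mem_closure_iff] at hf
  obtain ⟨F, hFmem, hFdist⟩ := hf (ε' / (2 * (M + 2))) (by positivity)
  obtain ⟨g, hg⟩ := Lp.mem_boundedContinuousFunction_iff.1 hFmem
  have hFcoe : ⇑F =ᵐ[μ] ⇑g := by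
    have h1 : ⇑F =ᵐ[μ] ⇑(g.toContinuousMap.toAEEqFun μ) := by
      rw [hg]
    exact h1.trans (g.toContinuousMap.coeFn_toAEEqFun μ)
  obtain ⟨n₀, hn₀⟩ := Metric.tendsto_atTop.1 (hBC g F hFcoe) (ε'/2) (by positivity)
  refine ⟨n₀, fun n hn => ?_⟩
  have h1 := hn₀ n hn
  rw [Real.dist_eq, sub_zero, abs_of_nonneg (norm_nonneg _)] at h1
  have h2 : ‖f - F‖ < ε' / (2 * (M + 2)) := by
    rw [← dist_eq_norm]
    exact hFdist
  have h3 : ‖T n f - f‖ ≤ ‖T n f - T n F‖ + ‖T n F - F‖ + ‖F - f‖ := by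
    calc ‖T n f - f‖ = ‖(T n f - T n F) + (T n F - F) + (F - f)‖ := by
          congr 1
          abel
      _ ≤ ‖(T n f - T n F) + (T n F - F)‖ + ‖F - f‖ := norm_add_le _ _
      _ ≤ ‖T n f - T n F‖ + ‖T n F - F‖ + ‖F - f‖ :=
          add_le_add (norm_add_le _ _) le_rfl
  have h4 : ‖T n f - T n F‖ ≤ M * ‖f - F‖ := hTlip n f F
  have h5 : ‖F - f‖ = ‖f - F‖ := norm_sub_rev _ _
  have h6 : (M + 1) * ‖f - F‖ < ε' / 2 := by
    have hlt : (M + 1) * ‖f - F‖ < (M + 1) * (ε' / (2 * (M + 2))) :=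
      mul_lt_mul_of_pos_left h2 (by linarith)
    have hle : (M + 1) * (ε' / (2 * (M + 2))) ≤ ε' / 2 := by
      rw [mul_div_assoc']
      rw [div_le_div_iff₀ (by positivity) (by norm_num : (0:ℝ) < 2)]
      nlinarith
    linarith
  rw [Real.dist_eq, sub_zero, abs_of_nonneg (norm_nonneg _)]
  have h7 : M * ‖f - F‖ + ‖f - F‖ = (M + 1) * ‖f - F‖ := by ring
  linarith
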